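/- Let G be an abelian group equipped with its Bohr topology (the topological group topology induced by all homomorphisms G → T), and let bG denote its Bohr compactification. Then no injective sequence of points of G converges in bG. -/

import Mathlib

/-- The canonical evaluation map of an abelian group `G` into the product
`𝕋^(Hom(G,𝕋))`.  The Bohr topology of `G` is the topology induced by this map, and
the Bohr compactification `bG` is the closure of its range in this compact product;
in particular a sequence in `G` converges in `bG` iff its image under `bohrEval`
converges in the product. -/
noncomputable def bohrEval (G : Type*) [AddCommGroup G] : G → ((G →+ AddCircle (1 : ℝ)) → AddCircle (1 : ℝ)) :=
  fun g χ => χ g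

open MeasureTheory Filter Complex Topology

namespace FlorAux

/-- The natural map `ℚ/ℤ →+ ℝ/ℤ`. -/
noncomputable def ratToReal : AddCircle (1 : ℚ) →+ AddCircle (1 : ℝ) :=
  QuotientAddGroup.map _ _ (Rat.castHom ℝ).toAddMonoidHom (by
    intro x hx
    obtain ⟨n, rfl⟩ := AddSubgroup.mem_zmultiples_iff.mp hx
    simp only [AddSubgroup.mem_comap, map_zsmul]
    refine AddSubgroup.zsmul_mem _ ?_ n
    simpa using AddSubgroup.mem_zmultiples (1 : ℝ))

lemma ratToReal_eq_zero {x : AddCircle (1 : ℚ)} (h : ratToReal x = 0) : x = 0 := by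
  induction x using QuotientAddGroup.induction_on with
  | H q =>
    have h' : (((q : ℝ) : AddCircle (1 : ℝ))) = 0 := h
    rw [AddCircle.coe_eq_zero_iff] at h'
    obtain ⟨n, hn⟩ := h'
    rw [AddCircle.coe_eq_zero_iff]
    have hq : (q : ℝ) = (n : ℝ) := by rw [← hn]; simp
    have hq' : q = (n : ℚ) := by exact_mod_cast hq
    exact ⟨n, by simp [hq']⟩

lemma exists_char {G : Type*} [AddCommGroup G] {g : G} (hg : g ≠ 0) :
    ∃ χ : G →+ AddCircle (1 : ℝ), χ g ≠ 0 := by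
  obtain ⟨c, hc⟩ := CharacterModule.exists_character_apply_ne_zero_of_ne_zero hg
  refine ⟨AddMonoidHom.mk' (fun x => ratToReal (c x)) (by intro x y; rw [map_add, map_add]), ?_⟩
  intro h
  exact hc (ratToReal_eq_zero h)

end FlorAux

set_option maxHeartbeats 1000000
set_option synthInstance.maxHeartbeats 400000

/-- No injective sequence of points of an abelian group `G` converges in the Bohr
compactification `bG` (Flor's theorem). -/
theorem stmt15 {G : Type*} [AddCommGroup G] (a : ℕ → G) (ha : Function.Injective a) :
    ¬ ∃ L : (G →+ AddCircle (1 : ℝ)) → AddCircle (1 : ℝ),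
        Filter.Tendsto (fun n => bohrEval G (a n)) Filter.atTop (nhds L) := by
  classical
  rintro ⟨L, hL⟩
  haveI : Fact ((0:ℝ) < 1) := ⟨one_pos⟩
  -- `K` : the group of characters of `G`, as a closed subgroup of the compact product.
  let K : AddSubgroup (G → AddCircle (1 : ℝ)) :=
    { carrier := {f | ∀ x y, f (x + y) = f x + f y}
      add_mem' := by
        intro f g hf hg x y
        simp only [Pi.add_apply, hf x y, hg x y]
        abel
      zero_mem' := by intro x y; simp
      neg_mem' := by
        intro f hf x y
        simp only [Pi.neg_apply, hf x y]
        abel }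
  have hKc : IsClosed (K : Set (G → AddCircle (1 : ℝ))) := by
    have hset : (K : Set (G → AddCircle (1 : ℝ)))
        = ⋂ (x : G) (y : G), {f : G → AddCircle (1 : ℝ) | f (x + y) = f x + f y} := by
      ext f
      simp only [Set.mem_iInter, Set.mem_setOf_eq]
      rfl
    rw [hset]
    exact isClosed_iInter fun x => isClosed_iInter fun y =>
      isClosed_eq (continuous_apply _) ((continuous_apply x).add (continuous_apply y))
  haveI : CompactSpace K := isCompact_iff_compactSpace.mp hKc.isCompact
  letI : MeasurableSpace K := borel K
  haveI : BorelSpace K := ⟨rfl⟩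
  haveI : WeaklyLocallyCompactSpace K := inferInstance
  haveI : LocallyCompactSpace K := inferInstance
  let μ : Measure K := Measure.addHaar
  haveI hHaar : μ.IsAddHaarMeasure := Measure.isAddHaarMeasure_addHaarMeasure _
  haveI : μ.IsAddLeftInvariant := hHaar.toIsAddLeftInvariant
  haveI : μ.IsOpenPosMeasure := hHaar.toIsOpenPosMeasure
  haveI : IsFiniteMeasureOnCompacts μ := hHaar.toIsFiniteMeasureOnCompacts
  -- the exponential evaluation maps
  let E : G → K → ℂ := fun g f => (AddCircle.toCircle (f.1 g) : ℂ)
  have hEcont : ∀ g, Continuous (E g) := fun g =>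
    continuous_subtype_val.comp
      (AddCircle.continuous_toCircle.comp ((continuous_apply g).comp continuous_subtype_val))
  have hEnorm : ∀ g f, ‖E g f‖ = 1 := by
    intro g f
    simp [E, Circle.norm_coe]
  have hEaddg : ∀ (g h : G) (f : K), E (g + h) f = E g f * E h f := by
    intro g h f
    simp only [E, f.2 g h, AddCircle.toCircle_add, Circle.coe_mul]
  have hEzero : ∀ f : K, E 0 f = 1 := by
    intro f
    have h0 : f.1 (0 : G) = 0 := by
      have h := f.2 (0 : G) (0 : G)
      rw [add_zero] at h
      exact left_eq_add.mp h
    simp [E, h0]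
  have hEconj : ∀ (g : G) (f : K), (starRingEnd ℂ) (E g f) = E (-g) f := by
    intro g f
    have h1 : E (-g) f * E g f = 1 := by
      rw [← hEaddg, neg_add_cancel, hEzero]
    have h2 : E g f ≠ 0 := by
      intro h; rw [h] at h1; simpa using h1
    have : E (-g) f = (E g f)⁻¹ := by
      field_simp at h1 ⊢
      linear_combination h1
    rw [this]
    rw [show E g f = ((AddCircle.toCircle (f.1 g) : Circle) : ℂ) from rfl]
    rw [← Circle.coe_inv, Circle.coe_inv_eq_conj]
  have hEmulf : ∀ (g : G) (f₀ f : K), E g (f₀ + f) = E g f₀ * E g f := by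
    intro g f₀ f
    simp only [E, AddSubgroup.coe_add, Pi.add_apply, AddCircle.toCircle_add, Circle.coe_mul]
  -- vanishing of integrals of nontrivial characters
  have hvanish : ∀ g : G, g ≠ 0 → ∫ f, E g f ∂μ = 0 := by
    intro g hg
    obtain ⟨χ, hχ⟩ := FlorAux.exists_char hg
    have hχK : (χ : G → AddCircle (1 : ℝ)) ∈ K := fun x y => map_add χ x y
    set f₀ : K := ⟨χ, hχK⟩ with hf₀
    have h1 : ∫ f, E g (f₀ + f) ∂μ = ∫ f, E g f ∂μ :=
      integral_add_left_eq_self (E g) f₀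
    have h2 : ∫ f, E g (f₀ + f) ∂μ = E g f₀ * ∫ f, E g f ∂μ := by
      simp_rw [hEmulf g f₀]
      exact integral_const_mul _ _
    have h3 : E g f₀ ≠ 1 := by
      intro h
      apply hχ
      have hcirc : AddCircle.toCircle (χ g) = 1 := by
        ext
        exact h
      have := AddCircle.injective_toCircle (one_ne_zero (α := ℝ))
        (a₁ := χ g) (a₂ := 0) (by rw [hcirc, AddCircle.toCircle_zero])
      exact this
    have h4 : (E g f₀ - 1) * ∫ f, E g f ∂μ = 0 := by
      rw [sub_mul, one_mul, ← h2, h1, sub_self]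
    rcases mul_eq_zero.mp h4 with h | h
    · exact absurd (sub_eq_zero.mp h) h3
    · exact h
  -- the would-be limit function
  let χf : K → (G →+ AddCircle (1 : ℝ)) := fun f => AddMonoidHom.mk' f.1 (fun x y => f.2 x y)
  let ℓ : K → ℂ := fun f => (AddCircle.toCircle (L (χf f)) : ℂ)
  have hℓnorm : ∀ f, ‖ℓ f‖ = 1 := by
    intro f
    simp [ℓ, Circle.norm_coe]
  have hpt : ∀ f : K, Filter.Tendsto (fun n => E (a n) f) Filter.atTop (nhds (ℓ f)) := by
    intro f
    have h1 : Filter.Tendsto (fun n => bohrEval G (a n) (χf f)) Filter.atTop (nhds (L (χf f))) :=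
      tendsto_pi_nhds.mp hL (χf f)
    have h2 : Filter.Tendsto (fun n => AddCircle.toCircle (f.1 (a n))) Filter.atTop
        (nhds (AddCircle.toCircle (L (χf f)))) :=
      (AddCircle.continuous_toCircle.tendsto _).comp h1
    exact (continuous_subtype_val.tendsto _).comp h2
  have hℓm : AEStronglyMeasurable ℓ μ :=
    aestronglyMeasurable_of_tendsto_ae Filter.atTop
      (fun n => (hEcont (a n)).aestronglyMeasurable)
      (Filter.Eventually.of_forall hpt)
  haveI : IsFiniteMeasure μ := CompactSpace.isFiniteMeasure
  have hone : Integrable (fun _ : K => (1 : ℝ)) μ := integrable_const 1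
  -- orthogonality
  have horth : ∀ m n : ℕ, m ≠ n → ∫ f, E (a m) f * (starRingEnd ℂ) (E (a n) f) ∂μ = 0 := by
    intro m n hmn
    have heq : ∀ f : K, E (a m) f * (starRingEnd ℂ) (E (a n) f) = E (a m - a n) f := by
      intro f
      rw [hEconj, ← hEaddg, sub_eq_add_neg]
    simp_rw [heq]
    exact hvanish _ (sub_ne_zero.mpr fun h => hmn (ha h))
  -- step 1 : `∫ ℓ ⬝ conj (E (a n)) = 0` for every `n`
  have hstep1 : ∀ n : ℕ, ∫ f, ℓ f * (starRingEnd ℂ) (E (a n) f) ∂μ = 0 := by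
    intro n
    have hdct : Filter.Tendsto (fun m => ∫ f, E (a m) f * (starRingEnd ℂ) (E (a n) f) ∂μ)
        Filter.atTop (nhds (∫ f, ℓ f * (starRingEnd ℂ) (E (a n) f) ∂μ)) := by
      refine tendsto_integral_of_dominated_convergence (fun _ => (1 : ℝ))
        (fun m => ((hEcont (a m)).mul (continuous_star.comp (hEcont (a n)))).aestronglyMeasurable)
        hone (fun m => Filter.Eventually.of_forall fun f => ?_)
        (Filter.Eventually.of_forall fun f => ?_)
      · rw [norm_mul, hEnorm, RCLike.norm_conj, hEnorm, one_mul]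
      · exact (hpt f).mul tendsto_const_nhds
    have hzero : Filter.Tendsto (fun m => ∫ f, E (a m) f * (starRingEnd ℂ) (E (a n) f) ∂μ)
        Filter.atTop (nhds (0 : ℂ)) := by
      apply Filter.Tendsto.congr' _ tendsto_const_nhds
      filter_upwards [Filter.eventually_ge_atTop (n + 1)] with m hm
      exact (horth m n (by omega)).symm
    exact (tendsto_nhds_unique hdct hzero)
  -- hence `∫ E (a n) ⬝ conj ℓ = 0` for every `n`
  have hstep2 : ∀ n : ℕ, ∫ f, E (a n) f * (starRingEnd ℂ) (ℓ f) ∂μ = 0 := by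
    intro n
    have : ∫ f, E (a n) f * (starRingEnd ℂ) (ℓ f) ∂μ
        = (starRingEnd ℂ) (∫ f, ℓ f * (starRingEnd ℂ) (E (a n) f) ∂μ) := by
      rw [← integral_conj]
      congr 1
      funext f
      simp [mul_comm]
    rw [this, hstep1 n, map_zero]
  -- step 2 : but those integrals tend to `μ(K) ≠ 0`
  have hdct2 : Filter.Tendsto (fun n => ∫ f, E (a n) f * (starRingEnd ℂ) (ℓ f) ∂μ)
      Filter.atTop (nhds (∫ f, ℓ f * (starRingEnd ℂ) (ℓ f) ∂μ)) := by
    refine tendsto_integral_of_dominated_convergence (fun _ => (1 : ℝ))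
      (fun n => (hEcont (a n)).aestronglyMeasurable.mul
        (continuous_star.comp_aestronglyMeasurable hℓm))
      hone (fun n => Filter.Eventually.of_forall fun f => ?_)
      (Filter.Eventually.of_forall fun f => ?_)
    · rw [norm_mul, hEnorm, RCLike.norm_conj, hℓnorm, one_mul]
    · exact (hpt f).mul tendsto_const_nhds
  have hval : ∫ f, ℓ f * (starRingEnd ℂ) (ℓ f) ∂μ = ((μ Set.univ).toReal : ℂ) := by
    have : ∀ f : K, ℓ f * (starRingEnd ℂ) (ℓ f) = 1 := by
      intro f
      rw [Complex.mul_conj]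
      norm_cast
      have := hℓnorm f
      rw [← Complex.sq_norm, this]
      norm_num
    simp_rw [this]
    rw [integral_const]
    simp
    rfl
  have hlim0 : Filter.Tendsto (fun n => ∫ f, E (a n) f * (starRingEnd ℂ) (ℓ f) ∂μ)
      Filter.atTop (nhds (0 : ℂ)) := by
    apply Filter.Tendsto.congr' _ tendsto_const_nhds
    filter_upwards with n using (hstep2 n).symm
  have hμ : ((μ Set.univ).toReal : ℂ) = 0 := by
    rw [← hval]
    exact tendsto_nhds_unique hdct2 hlim0
  have hμpos : 0 < μ Set.univ := isOpen_univ.measure_pos μ Set.univ_nonempty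
  have hμfin : μ Set.univ ≠ ⊤ := measure_ne_top μ _
  rw [Complex.ofReal_eq_zero, ENNReal.toReal_eq_zero_iff] at hμ
  rcases hμ with h | h
  · exact hμpos.ne' h
  · exact hμfin h
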